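/- Let L ∈ ℝ^{2n×2} have linearly independent columns L₁, L₂. For an upper triangular parameter matrix D = [[c, f],[0, c⁻¹]] with c ≠ 0, the function (c, f) ↦ ‖L Dᵀ‖_F² = c²‖L₁‖₂² + 2cf·L₁ᵀL₂ + f²‖L₂‖₂² + ‖L₂‖₂²/c² attains its global minimum value 2√(det(LᵀL)) at ĉ = ‖L₂‖₂ / (det(LᵀL))^{1/4} and f̂ = −(L₁ᵀL₂) / (‖L₂‖₂ · (det(LᵀL))^{1/4}). -/

import Mathlib

open Matrix

noncomputable def euclNorm {m : ℕ} (v : Fin m → ℝ) : ℝ := Real.sqrt (∑ i, v i ^ 2)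

noncomputable def frob {m n : ℕ} (A : Matrix (Fin m) (Fin n) ℝ) : ℝ :=
  Real.sqrt (∑ i, ∑ j, A i j ^ 2)

noncomputable def specNorm {m n : ℕ} (A : Matrix (Fin m) (Fin n) ℝ) : ℝ :=
  ‖(Matrix.toEuclideanLin A).toContinuousLinearMap‖

noncomputable def sigmaMax (B : Matrix (Fin 2) (Fin 2) ℝ) : ℝ :=
  Real.sqrt (max ((Matrix.isHermitian_conjTranspose_mul_self B).eigenvalues 0)
                 ((Matrix.isHermitian_conjTranspose_mul_self B).eigenvalues 1))

noncomputable def sigmaMin (B : Matrix (Fin 2) (Fin 2) ℝ) : ℝ :=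
  Real.sqrt (min ((Matrix.isHermitian_conjTranspose_mul_self B).eigenvalues 0)
                 ((Matrix.isHermitian_conjTranspose_mul_self B).eigenvalues 1))

lemma expand_aux {n : ℕ} (L : Matrix (Fin (2*n)) (Fin 2) ℝ) (c f : ℝ) (hc : c ≠ 0) :
    frob (L * (!![c, f; 0, c⁻¹] : Matrix (Fin 2) (Fin 2) ℝ)ᵀ) ^ 2 =
      c ^ 2 * (∑ i, L i 0 ^ 2) + 2 * c * f * (∑ i, L i 0 * L i 1)
        + f ^ 2 * (∑ i, L i 1 ^ 2) + (∑ i, L i 1 ^ 2) / c ^ 2 := by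
  rw [frob, Real.sq_sqrt (Finset.sum_nonneg fun i _ => Finset.sum_nonneg fun j _ => sq_nonneg ((L * (!![c, f; 0, c⁻¹] : Matrix (Fin 2) (Fin 2) ℝ)ᵀ) i j))]
  have key : ∀ i, ∑ j, (L * (!![c, f; 0, c⁻¹] : Matrix (Fin 2) (Fin 2) ℝ)ᵀ) i j ^ 2 =
      c ^ 2 * L i 0 ^ 2 + 2 * c * f * (L i 0 * L i 1) + f ^ 2 * L i 1 ^ 2 + L i 1 ^ 2 / c ^ 2 := by
    intro i
    have ht : (!![c, f; 0, c⁻¹] : Matrix (Fin 2) (Fin 2) ℝ)ᵀ = !![c, 0; f, c⁻¹] := by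
      ext a b; fin_cases a <;> fin_cases b <;> simp
    rw [ht]
    simp [Matrix.mul_apply, Fin.sum_univ_two]
    field_simp
    ring
  simp_rw [key, Finset.sum_add_distrib, ← Finset.mul_sum, ← Finset.sum_div]

lemma det_eq {n : ℕ} (L : Matrix (Fin (2*n)) (Fin 2) ℝ) :
    (Lᵀ * L).det = (∑ i, L i 0 ^ 2) * (∑ i, L i 1 ^ 2) - (∑ i, L i 0 * L i 1) ^ 2 := by
  rw [Matrix.det_fin_two]
  simp only [Matrix.mul_apply, Matrix.transpose_apply]
  have h1 : ∑ i, L i 0 * L i 0 = ∑ i, L i 0 ^ 2 := by simp [sq]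
  have h2 : ∑ i, L i 1 * L i 1 = ∑ i, L i 1 ^ 2 := by simp [sq]
  have h3 : ∑ i, L i 1 * L i 0 = ∑ i, L i 0 * L i 1 :=
    Finset.sum_congr rfl fun i _ => mul_comm _ _
  rw [h1, h2, h3]; ring

lemma key_eq (a b E S : ℝ) (hE : E ≠ 0) (hS : S ≠ 0)
    (hS4 : (S ^ 2) ^ 2 = a * E ^ 2 - b ^ 2) :
    (E / S) ^ 2 * a + 2 * (E / S) * (-b / (E * S)) * b + (-b / (E * S)) ^ 2 * E ^ 2
      + E ^ 2 / (E / S) ^ 2 = 2 * S ^ 2 := by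
  field_simp
  linear_combination (-1) * hS4

lemma key_ineq (a b d S t g : ℝ) (hd : 0 < d) (ht : 0 < t)
    (hS4 : S ^ 2 = a * d - b ^ 2) :
    2 * S * t ≤ t ^ 2 * a + 2 * t * g * b + g ^ 2 * d + d := by
  nlinarith [sq_nonneg (g * d + t * b), sq_nonneg (t * S - d), hd, ht]

theorem optimal_block_scaling_min {n : ℕ} (L : Matrix (Fin (2*n)) (Fin 2) ℝ)
    (hLI : LinearIndependent ℝ ![fun i => L i 0, fun i => L i 1])
    (cop fop : ℝ)
    (hc : cop = euclNorm (fun i => L i 1) / Real.sqrt (Real.sqrt (Lᵀ * L).det))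
    (hf : fop = -(∑ i, L i 0 * L i 1) /
        (euclNorm (fun i => L i 1) * Real.sqrt (Real.sqrt (Lᵀ * L).det))) :
    (∀ c f : ℝ, c ≠ 0 →
      frob (L * (!![c, f; 0, c⁻¹] : Matrix (Fin 2) (Fin 2) ℝ)ᵀ) ^ 2 =
        c ^ 2 * euclNorm (fun i => L i 0) ^ 2
          + 2 * c * f * (∑ i, L i 0 * L i 1)
          + f ^ 2 * euclNorm (fun i => L i 1) ^ 2
          + euclNorm (fun i => L i 1) ^ 2 / c ^ 2) ∧
    frob (L * (!![cop, fop; 0, cop⁻¹] : Matrix (Fin 2) (Fin 2) ℝ)ᵀ) ^ 2 =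
      2 * Real.sqrt (Lᵀ * L).det ∧
    (∀ c f : ℝ, c ≠ 0 →
      2 * Real.sqrt (Lᵀ * L).det ≤
        frob (L * (!![c, f; 0, c⁻¹] : Matrix (Fin 2) (Fin 2) ℝ)ᵀ) ^ 2) := by
  rw [LinearIndependent.pair_iff] at hLI
  have ea : euclNorm (fun i => L i 0) ^ 2 = ∑ i, L i 0 ^ 2 := by
    rw [euclNorm]; exact Real.sq_sqrt (Finset.sum_nonneg fun i _ => sq_nonneg _)
  have ed : euclNorm (fun i => L i 1) ^ 2 = ∑ i, L i 1 ^ 2 := by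
    rw [euclNorm]; exact Real.sq_sqrt (Finset.sum_nonneg fun i _ => sq_nonneg _)
  -- positivity of ∑ L i 1 ^ 2
  have hvne : (fun i => L i 1) ≠ (0 : Fin (2*n) → ℝ) := by
    intro h
    have := (hLI 0 1 (by rw [h]; simp)).2
    norm_num at this
  have hd : 0 < ∑ i, L i 1 ^ 2 := by
    obtain ⟨i, hi⟩ := Function.ne_iff.mp hvne
    have hi' : L i 1 ≠ 0 := by simpa using hi
    exact Finset.sum_pos' (fun j _ => sq_nonneg _)
      ⟨i, Finset.mem_univ i, by positivity⟩
  -- positivity of the Gram determinant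
  have hΔ : 0 < (∑ i, L i 0 ^ 2) * (∑ i, L i 1 ^ 2) - (∑ i, L i 0 * L i 1) ^ 2 := by
    by_contra hcon
    push_neg at hcon
    have hterm : ∀ i, ((∑ j, L j 1 ^ 2) * L i 0 - (∑ j, L j 0 * L j 1) * L i 1) ^ 2 =
        (∑ j, L j 1 ^ 2) ^ 2 * L i 0 ^ 2
          - 2 * (∑ j, L j 1 ^ 2) * (∑ j, L j 0 * L j 1) * (L i 0 * L i 1)
          + (∑ j, L j 0 * L j 1) ^ 2 * L i 1 ^ 2 := fun i => by ring
    have hsum : ∑ i, ((∑ j, L j 1 ^ 2) * L i 0 - (∑ j, L j 0 * L j 1) * L i 1) ^ 2 =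
        (∑ i, L i 1 ^ 2) *
          ((∑ i, L i 0 ^ 2) * (∑ i, L i 1 ^ 2) - (∑ i, L i 0 * L i 1) ^ 2) := by
      simp_rw [hterm, Finset.sum_add_distrib, Finset.sum_sub_distrib, ← Finset.mul_sum]
      ring
    have hle : ∑ i, ((∑ j, L j 1 ^ 2) * L i 0 - (∑ j, L j 0 * L j 1) * L i 1) ^ 2 ≤ 0 := by
      rw [hsum]; nlinarith
    have heq : ∑ i, ((∑ j, L j 1 ^ 2) * L i 0 - (∑ j, L j 0 * L j 1) * L i 1) ^ 2 = 0 :=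
      le_antisymm hle (Finset.sum_nonneg fun i _ => sq_nonneg _)
    have hall := (Finset.sum_eq_zero_iff_of_nonneg (fun i _ => sq_nonneg _)).mp heq
    have hzero : (∑ j, L j 1 ^ 2) • (fun i => L i 0)
        + (-(∑ j, L j 0 * L j 1)) • (fun i => L i 1) = (0 : Fin (2*n) → ℝ) := by
      funext i
      have h0 := hall i (Finset.mem_univ i)
      have h2 : (∑ j, L j 1 ^ 2) * L i 0 - (∑ j, L j 0 * L j 1) * L i 1 = 0 :=
        by exact sub_eq_zero.mpr (by nlinarith [sq_eq_zero_iff.mp h0])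
      simp only [Pi.add_apply, Pi.smul_apply, smul_eq_mul, Pi.zero_apply, neg_mul]
      linarith
    exact absurd (hLI _ _ hzero).1 (ne_of_gt hd)
  have hΔ' : 0 < (Lᵀ * L).det := by rw [det_eq]; exact hΔ
  have hS : 0 < Real.sqrt (Real.sqrt (Lᵀ * L).det) := Real.sqrt_pos.mpr (Real.sqrt_pos.mpr hΔ')
  have hE : 0 < euclNorm (fun i => L i 1) := by rw [euclNorm]; exact Real.sqrt_pos.mpr hd
  have hS2 : Real.sqrt (Real.sqrt (Lᵀ * L).det) ^ 2 = Real.sqrt (Lᵀ * L).det :=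
    Real.sq_sqrt (Real.sqrt_nonneg _)
  refine ⟨fun c f hc0 => by rw [expand_aux L c f hc0, ea, ed], ?_, ?_⟩
  · have hcop : cop ≠ 0 := by rw [hc]; exact div_ne_zero hE.ne' hS.ne'
    have h4 : ((Real.sqrt (Real.sqrt (Lᵀ * L).det)) ^ 2) ^ 2 =
        (∑ i, L i 0 ^ 2) * euclNorm (fun i => L i 1) ^ 2 - (∑ i, L i 0 * L i 1) ^ 2 := by
      rw [hS2, Real.sq_sqrt hΔ'.le, det_eq, ed]
    rw [expand_aux L cop fop hcop, hc, hf, ← ed]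
    exact (key_eq _ _ _ _ hE.ne' hS.ne' h4).trans (by rw [hS2])
  · intro c f hc0
    rw [expand_aux L c f hc0]
    have ht : 0 < c ^ 2 := by positivity
    have hS4 : Real.sqrt (Lᵀ * L).det ^ 2 =
        (∑ i, L i 0 ^ 2) * (∑ i, L i 1 ^ 2) - (∑ i, L i 0 * L i 1) ^ 2 := by
      rw [Real.sq_sqrt hΔ'.le]; exact det_eq L
    have key := key_ineq (∑ i, L i 0 ^ 2) (∑ i, L i 0 * L i 1) (∑ i, L i 1 ^ 2)
      (Real.sqrt (Lᵀ * L).det) (c ^ 2) (c * f) hd ht hS4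
    have hrw : c ^ 2 * (∑ i, L i 0 ^ 2) + 2 * c * f * (∑ i, L i 0 * L i 1)
        + f ^ 2 * (∑ i, L i 1 ^ 2) + (∑ i, L i 1 ^ 2) / c ^ 2 =
        ((c ^ 2) ^ 2 * (∑ i, L i 0 ^ 2) + 2 * (c ^ 2) * (c * f) * (∑ i, L i 0 * L i 1)
          + (c * f) ^ 2 * (∑ i, L i 1 ^ 2) + (∑ i, L i 1 ^ 2)) / c ^ 2 := by
      field_simp
    rw [hrw, le_div_iff₀ ht]
    linarith
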